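/- Let k be an algebraically closed field of characteristic 2 and let f = w*z^2 + x^3 + y^2*z ∈ k[x,y,z,w]. Then f ∈ (x^2, y^2, z^2, w^2); consequently, by Fedder's criterion, the cubic surface {w z^2 + x^3 + y^2 z = 0} in P^3 (the del Pezzo surface of degree 3 with singularity type E_6^0) is not Frobenius split. -/

import Mathlib

open MvPolynomial

/-- A ring `R` of characteristic `p` is Frobenius split if the Frobenius `R → R, r ↦ rᵖ`
admits a splitting, i.e. an additive map `σ : R → R` with `σ 1 = 1` and
`σ (aᵖ · b) = a · σ b`.  For the homogeneous coordinate ring of a Du Val del Pezzo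
surface this is equivalent to (global) Frobenius splitting of the surface. -/
def IsFrobeniusSplitRing (p : ℕ) (R : Type*) [CommRing R] : Prop :=
  ∃ σ : R →+ R, σ 1 = 1 ∧ ∀ a b : R, σ (a ^ p * b) = a * σ b

set_option linter.unnecessarySeqFocus false

namespace FedderAux

variable {k : Type*} [Field k] [CharP k 2] [PerfectRing k 2]

/-- The inverse of the Frobenius on a perfect field of characteristic 2. -/
noncomputable def rt (c : k) : k := (frobeniusEquiv k 2).symm c

lemma rt_zero : rt (0 : k) = 0 := map_zero _
lemma rt_add (a b : k) : rt (a + b) = rt a + rt b := map_add _ _ _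
lemma rt_sq (c : k) : (rt c) ^ 2 = c := by
  have h := frobenius_apply_frobeniusEquiv_symm k 2 c
  rw [frobenius_def] at h
  exact h
lemma rt_sq_mul (c d : k) : rt (c ^ 2 * d) = c * rt d := by
  have h : rt (c ^ 2) = c := by
    have h2 : frobeniusEquiv k 2 c = c ^ 2 := rfl
    simp [rt, ← h2]
  rw [show rt (c ^ 2 * d) = rt (c ^ 2) * rt d from map_mul _ _ _, h]

/-- Halve all exponents. -/
noncomputable def half (a : Fin 4 →₀ ℕ) : Fin 4 →₀ ℕ :=
  Finsupp.mapRange (· / 2) (by simp) a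

lemma half_apply (a : Fin 4 →₀ ℕ) (i : Fin 4) : half a i = a i / 2 :=
  Finsupp.mapRange_apply

/-- The "trace" projection dual to the top squarefree monomial `xyzw`:
it extracts the square root of the part of `h` supported on monomials with all
exponents odd. -/
noncomputable def Phi (h : MvPolynomial (Fin 4) k) : MvPolynomial (Fin 4) k :=
  Finsupp.sum (AddMonoidAlgebra.coeff h) fun a c => if ∀ i, a i % 2 = 1 then monomial (half a) (rt c) else 0

lemma Phi_add (h g : MvPolynomial (Fin 4) k) : Phi (h + g) = Phi h + Phi g := by
  classical
  rw [Phi, Phi, Phi, AddMonoidAlgebra.coeff_add]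
  refine Finsupp.sum_add_index' (fun a => ?_) (fun a b₁ b₂ => ?_)
  · split <;> simp [rt_zero]
  · split <;> simp [rt_add]

lemma Phi_monomial (a : Fin 4 →₀ ℕ) (c : k) :
    Phi (monomial a c) =
      if ∀ i, a i % 2 = 1 then monomial (half a) (rt c) else 0 := by
  classical
  rw [Phi, ← single_eq_monomial, AddMonoidAlgebra.coeff_single]
  refine Finsupp.sum_single_index ?_
  split <;> simp [rt_zero]

/-- `Phi` as an additive monoid hom. -/
noncomputable def PhiHom : MvPolynomial (Fin 4) k →+ MvPolynomial (Fin 4) k :=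
  AddMonoidHom.mk' Phi Phi_add

lemma Phi_sum {ι : Type*} (s : Finset ι) (g : ι → MvPolynomial (Fin 4) k) :
    Phi (∑ x ∈ s, g x) = ∑ x ∈ s, Phi (g x) :=
  map_sum PhiHom g s

/-- Frobenius semilinearity of `Phi`. -/
lemma Phi_sq_mul (h g : MvPolynomial (Fin 4) k) : Phi (h ^ 2 * g) = h * Phi g := by
  induction h using MvPolynomial.induction_on' generalizing g with
  | monomial a c =>
    induction g using MvPolynomial.induction_on' with
    | monomial b d =>
      rw [monomial_pow, monomial_mul, Phi_monomial, Phi_monomial]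
      have hcoord : ∀ i : Fin 4, (2 • a + b) i = 2 * a i + b i := by
        intro i; simp [Finsupp.add_apply, Finsupp.smul_apply]
      by_cases hb : ∀ i : Fin 4, b i % 2 = 1
      · rw [if_pos, if_pos hb]
        · have hhalf : half (2 • a + b) = a + half b := by
            ext i
            rw [half_apply, hcoord, Finsupp.add_apply, half_apply]
            omega
          rw [hhalf, rt_sq_mul, ← monomial_mul]
        · intro i; rw [hcoord]; have := hb i; omega
      · rw [if_neg, if_neg hb, mul_zero]
        intro hcon
        apply hb
        intro i
        have := hcon i
        rw [hcoord] at this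
        omega
    | add p q hp hq =>
      rw [mul_add, Phi_add, hp, hq, Phi_add, mul_add]
  | add p q hp hq =>
    have hsq : (p + q) ^ 2 = p ^ 2 + q ^ 2 := add_pow_char _ _ _
    rw [hsq, add_mul, Phi_add, hp, hq, add_mul]

/-- The exponent of the squarefree monomial attached to `ε : Fin 4 → Bool`. -/
noncomputable def eE (ε : Fin 4 → Bool) : Fin 4 →₀ ℕ :=
  Finsupp.equivFunOnFinite.symm fun i => if ε i then 1 else 0

lemma eE_apply (ε : Fin 4 → Bool) (i : Fin 4) : eE ε i = if ε i then 1 else 0 := rfl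

/-- The squarefree monomial attached to `ε : Fin 4 → Bool`. -/
noncomputable def Xm (ε : Fin 4 → Bool) : MvPolynomial (Fin 4) k := monomial (eE ε) 1

/-- Every polynomial decomposes as `∑_ε (Φ(X^{εᶜ}·h))² · X^ε`:
`{X^ε}` is a basis of `S` over its subring of squares, with dual basis `h ↦ Φ(X^{εᶜ}·h)`. -/
lemma decomp (h : MvPolynomial (Fin 4) k) :
    h = ∑ ε : Fin 4 → Bool, (Phi (Xm (fun i => !ε i) * h)) ^ 2 * Xm ε := by
  induction h using MvPolynomial.induction_on' with
  | add p q hp hq =>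
    have step : ∀ ε : Fin 4 → Bool,
        (Phi (Xm (fun i => !ε i) * (p + q))) ^ 2 * Xm ε =
          (Phi (Xm (fun i => !ε i) * p)) ^ 2 * Xm ε
            + (Phi (Xm (fun i => !ε i) * q)) ^ 2 * Xm ε := by
      intro ε
      rw [mul_add, Phi_add, add_pow_char, add_mul]
    rw [Finset.sum_congr rfl fun ε _ => step ε, Finset.sum_add_distrib, ← hp, ← hq]
  | monomial a c =>
    classical
    have key : ∀ ε : Fin 4 → Bool,
        Phi (Xm (fun i => !ε i) * monomial a c) =
          if (∀ i, (eE (fun i => !ε i) + a) i % 2 = 1)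
            then monomial (half (eE (fun i => !ε i) + a)) (rt c) else 0 := by
      intro ε
      rw [Xm, monomial_mul, one_mul, Phi_monomial]
    rw [Finset.sum_congr rfl fun ε _ => by rw [key ε]]
    rw [Finset.sum_eq_single (fun i => decide (a i % 2 = 1))]
    · rw [if_pos]
      · rw [Xm, monomial_pow, monomial_mul]
        have hexp : 2 • half (eE (fun i => !decide (a i % 2 = 1)) + a)
            + eE (fun i => decide (a i % 2 = 1)) = a := by
          ext i
          simp only [Finsupp.add_apply, Finsupp.smul_apply, smul_eq_mul,
            half_apply, eE_apply]
          by_cases hi : a i % 2 = 1 <;> simp [hi] <;> omega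
        rw [hexp, rt_sq, mul_one]
      · intro i
        simp only [Finsupp.add_apply, eE_apply]
        by_cases hi : a i % 2 = 1 <;> simp [hi] <;> omega
    · intro ε _ hne
      rw [if_neg]
      · simp
      · intro hcon
        apply hne
        funext i
        have := hcon i
        simp only [Finsupp.add_apply, eE_apply] at this
        cases hε : ε i <;> simp [hε] at this ⊢ <;> omega
    · intro hcon; exact absurd (Finset.mem_univ _) hcon

end FedderAux

open FedderAux in
/-- Let `k` be algebraically closed of characteristic 2 and
`f = w·z² + x³ + y²·z ∈ k[x,y,z,w]`.  Then `f ∈ (x², y², z², w²)`; consequently, by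
Fedder's criterion, the cubic surface `{w·z² + x³ + y²·z = 0} ⊆ ℙ³` (the del Pezzo
surface of degree 3 of type `E₆⁰`) is not Frobenius split. -/
theorem fedder_E6_0_char2 (k : Type*) [Field k] [IsAlgClosed k] [CharP k 2] :
    (X 3 * X 2 ^ 2 + X 0 ^ 3 + X 1 ^ 2 * X 2 : MvPolynomial (Fin 4) k) ∈
      Ideal.span {(X 0 : MvPolynomial (Fin 4) k) ^ 2, X 1 ^ 2, X 2 ^ 2, X 3 ^ 2} ∧
    ¬ IsFrobeniusSplitRing 2
        (MvPolynomial (Fin 4) k ⧸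
          Ideal.span {(X 3 * X 2 ^ 2 + X 0 ^ 3 + X 1 ^ 2 * X 2 : MvPolynomial (Fin 4) k)}) := by
  set f : MvPolynomial (Fin 4) k := X 3 * X 2 ^ 2 + X 0 ^ 3 + X 1 ^ 2 * X 2 with hf
  constructor
  · -- `f = x²·x + y²·z + z²·w ∈ (x², y², z², w²)`
    have h0 : (X 0 : MvPolynomial (Fin 4) k) ^ 2 ∈
        Ideal.span {(X 0 : MvPolynomial (Fin 4) k) ^ 2, X 1 ^ 2, X 2 ^ 2, X 3 ^ 2} :=
      Ideal.subset_span (Set.mem_insert _ _)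
    have h1 : (X 1 : MvPolynomial (Fin 4) k) ^ 2 ∈
        Ideal.span {(X 0 : MvPolynomial (Fin 4) k) ^ 2, X 1 ^ 2, X 2 ^ 2, X 3 ^ 2} :=
      Ideal.subset_span (Set.mem_insert_of_mem _ (Set.mem_insert _ _))
    have h2 : (X 2 : MvPolynomial (Fin 4) k) ^ 2 ∈
        Ideal.span {(X 0 : MvPolynomial (Fin 4) k) ^ 2, X 1 ^ 2, X 2 ^ 2, X 3 ^ 2} :=
      Ideal.subset_span (Set.mem_insert_of_mem _ (Set.mem_insert_of_mem _ (Set.mem_insert _ _)))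
    have hrw : f = X 2 ^ 2 * X 3 + X 0 ^ 2 * X 0 + X 1 ^ 2 * X 2 := by rw [hf]; ring
    rw [hrw]
    exact add_mem (add_mem (Ideal.mul_mem_right _ _ h2) (Ideal.mul_mem_right _ _ h0))
      (Ideal.mul_mem_right _ _ h1)
  · rintro ⟨σ, hσ1, hσ⟩
    set q : MvPolynomial (Fin 4) k →+* MvPolynomial (Fin 4) k ⧸ Ideal.span {f} :=
      Ideal.Quotient.mk (Ideal.span {f}) with hq
    -- choose lifts of the values of σ on the squarefree monomials
    choose d hd using fun ε : Fin 4 → Bool =>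
      Ideal.Quotient.mk_surjective (I := Ideal.span {f}) (σ (q (Xm ε)))
    set T0 : (Fin 4 → Bool) → MvPolynomial (Fin 4) k :=
      fun ε => Xm (fun i => !ε i) with hT0
    set G : MvPolynomial (Fin 4) k := ∑ ε : Fin 4 → Bool, (d ε) ^ 2 * T0 ε with hG
    -- Lemma A: σ ∘ q is represented by Φ(G·–)
    have hA : ∀ h : MvPolynomial (Fin 4) k, q (Phi (G * h)) = σ (q h) := by
      intro h
      have e1 : G * h = ∑ ε : Fin 4 → Bool, (d ε) ^ 2 * (T0 ε * h) := by
        rw [hG, Finset.sum_mul]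
        exact Finset.sum_congr rfl fun ε _ => by ring
      have e2 : Phi (G * h) = ∑ ε : Fin 4 → Bool, d ε * Phi (T0 ε * h) := by
        rw [e1, Phi_sum]
        exact Finset.sum_congr rfl fun ε _ => Phi_sq_mul _ _
      have e3 : σ (q h) =
          ∑ ε : Fin 4 → Bool, q (Phi (T0 ε * h)) * σ (q (Xm ε)) := by
        conv_lhs => rw [decomp h]
        rw [map_sum, map_sum]
        refine Finset.sum_congr rfl fun ε _ => ?_
        rw [map_mul, map_pow]
        exact hσ _ _
      rw [e2, map_sum, e3]
      refine Finset.sum_congr rfl fun ε _ => ?_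
      rw [map_mul, hd ε, mul_comm]
    -- Lemma B: Φ(G·f·s) ∈ (f) for every s
    have hB : ∀ s : MvPolynomial (Fin 4) k, f ∣ Phi (G * (f * s)) := by
      intro s
      have h0 : q (f * s) = 0 := by
        rw [hq, Ideal.Quotient.eq_zero_iff_mem]
        exact Ideal.mem_span_singleton.2 (dvd_mul_right f s)
      have := hA (f * s)
      rw [h0, map_zero] at this
      rw [← Ideal.mem_span_singleton]
      exact (Ideal.Quotient.eq_zero_iff_mem).1 this
    choose w hw using fun ε : Fin 4 → Bool => hB (T0 ε)
    -- hence G·f ∈ (f²) and so G = f·T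
    have hu : G * f = f ^ 2 * ∑ ε : Fin 4 → Bool, (w ε) ^ 2 * Xm ε := by
      conv_lhs => rw [decomp (G * f)]
      rw [Finset.mul_sum]
      refine Finset.sum_congr rfl fun ε _ => ?_
      have hcomm : T0 ε * (G * f) = G * (f * T0 ε) := by ring
      rw [hcomm, hw ε]
      ring
    have hf0 : f ≠ 0 := by
      intro hcon
      have := congrArg (eval (fun i : Fin 4 => if i = 0 then (1 : k) else 0)) hcon
      rw [hf] at this
      simp at this
    set T : MvPolynomial (Fin 4) k := ∑ ε : Fin 4 → Bool, (w ε) ^ 2 * Xm ε with hT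
    have hGT : G = f * T := by
      apply mul_left_cancel₀ hf0
      rw [show f * G = G * f from mul_comm _ _, hu, hT]
      ring
    -- conclude: 1 = q (Φ G) but Φ G ∈ (x, y, z)
    have h1 : (1 : MvPolynomial (Fin 4) k ⧸ Ideal.span {f}) = q (Phi G) := by
      have := hA 1
      rw [mul_one, map_one, hσ1] at this
      exact this.symm
    have hft : f * T = (X 0 : MvPolynomial (Fin 4) k) ^ 2 * (X 0 * T)
        + X 1 ^ 2 * (X 2 * T) + X 2 ^ 2 * (X 3 * T) := by
      rw [hf]; ring
    have hPhiG : Phi G = X 0 * Phi (X 0 * T) + X 1 * Phi (X 2 * T)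
        + X 2 * Phi (X 3 * T) := by
      rw [hGT, hft, Phi_add, Phi_add, Phi_sq_mul, Phi_sq_mul, Phi_sq_mul]
    have hdvd : f ∣ 1 - Phi G := by
      rw [← Ideal.mem_span_singleton, ← Ideal.Quotient.eq_zero_iff_mem]
      show q (1 - Phi G) = 0
      rw [map_sub, map_one, ← h1, sub_self]
    obtain ⟨c, hc⟩ := hdvd
    have hL : constantCoeff (1 - Phi G : MvPolynomial (Fin 4) k) = 1 := by
      rw [map_sub, map_one, hPhiG]
      simp
    have hR : constantCoeff (f * c) = 0 := by
      rw [map_mul]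
      have hcf : constantCoeff f = 0 := by rw [hf]; simp
      rw [hcf, zero_mul]
    rw [hc, hR] at hL
    exact zero_ne_one hL
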